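/- arXiv:1802.04982 — 2 statements merged into one kernel-verified Lean document; each statement's English description precedes it below -/
import Mathlib

section
/- Let F_red and F_blue be clausal ground formulas and let T be a closed two-sided clausal ground tableau for F_red and F_blue. Then for every node N of T: (a) F_red ∧ branch_red(N) ⊨ ipol(N) and ipol(N) ⊨ ¬F_blue ∨ ¬branch_blue(N); and (b) lit(ipol(N)) ⊆ lit(F_red ∧ branch_red(N)) ∩ lit(¬F_blue ∨ ¬branch_blue(N)). -/
namespace CTI

/-- Terms of first-order logic: variables and function applications.
Function symbols with empty argument lists play the role of constants. -/
inductive Tm : Type where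
  | var : ℕ → Tm
  | fn  : ℕ → List Tm → Tm

/-- The variables occurring in a term. -/
def Tm.vars : Tm → List ℕ
  | .var x => [x]
  | .fn _ ts => (ts.attach.map (fun t => Tm.vars t.1)).flatten
decreasing_by
  have h := List.sizeOf_lt_of_mem t.2; simp_wf; omega

/-- The function symbols occurring in a term. -/
def Tm.funs : Tm → List ℕ
  | .var _ => []
  | .fn f ts => f :: (ts.attach.map (fun t => Tm.funs t.1)).flatten
decreasing_by
  have h := List.sizeOf_lt_of_mem t.2; simp_wf; omega

/-- A term is ground iff it contains no variables. -/
def Tm.ground (t : Tm) : Prop := t.vars = []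

/-- An interpretation (structure) over domain `D`. -/
structure Interp (D : Type) where
  fn : ℕ → List D → D
  pr : ℕ → List D → Prop

/-- Evaluation of a term under an interpretation and a variable assignment. -/
def Tm.eval {D : Type} (I : Interp D) (a : ℕ → D) : Tm → D
  | .var x => a x
  | .fn f ts => I.fn f (ts.attach.map (fun t => Tm.eval I a t.1))
decreasing_by
  have h := List.sizeOf_lt_of_mem t.2; simp_wf; omega

/-- Formulas of first-order logic without equality. -/
inductive Fml : Type where
  | tru : Fml
  | fls : Fml
  | atom : ℕ → List Tm → Fml
  | neg : Fml → Fml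
  | and : Fml → Fml → Fml
  | or : Fml → Fml → Fml
  | all : ℕ → Fml → Fml
  | ex : ℕ → Fml → Fml

/-- Satisfaction of a formula under an interpretation and an assignment. -/
def Fml.holds {D : Type} (I : Interp D) : (ℕ → D) → Fml → Prop
  | _, .tru => True
  | _, .fls => False
  | a, .atom p ts => I.pr p (ts.map (Tm.eval I a))
  | a, .neg F => ¬ Fml.holds I a F
  | a, .and F G => Fml.holds I a F ∧ Fml.holds I a G
  | a, .or F G => Fml.holds I a F ∨ Fml.holds I a G
  | a, .all x F => ∀ d : D, Fml.holds I (Function.update a x d) F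
  | a, .ex x F => ∃ d : D, Fml.holds I (Function.update a x d) F

/-- Semantic entailment: every structure (with nonempty domain) and assignment
satisfying `F` satisfies `G`. -/
def Entails (F G : Fml) : Prop :=
  ∀ (D : Type) (_ : Nonempty D) (I : Interp D) (a : ℕ → D), F.holds I a → G.holds I a

/-- Semantic equivalence. -/
def EquivF (F G : Fml) : Prop := Entails F G ∧ Entails G F

/-- The atoms occurring in a formula, together with a polarity, relative to
the polarity `pol` of the context (`true` = positive). -/
def Fml.litsP : Bool → Fml → Set (Bool × ℕ × List Tm)
  | _, .tru => ∅
  | _, .fls => ∅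
  | pol, .atom p ts => {(pol, p, ts)}
  | pol, .neg F => Fml.litsP (!pol) F
  | pol, .and F G => Fml.litsP pol F ∪ Fml.litsP pol G
  | pol, .or F G => Fml.litsP pol F ∪ Fml.litsP pol G
  | pol, .all _ F => Fml.litsP pol F
  | pol, .ex _ F => Fml.litsP pol F

/-- lit(F): the set of pairs of an atom together with a polarity such that
the atom occurs in `F` with that polarity. -/
def Fml.lits (F : Fml) : Set (Bool × ℕ × List Tm) := Fml.litsP true F

/-- pred(F): predicates together with polarities of their occurrences. -/
def Fml.preds (F : Fml) : Set (Bool × ℕ) := {bp | ∃ ts, (bp.1, bp.2, ts) ∈ F.lits}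

/-- The predicate symbols occurring in a formula (irrespective of polarity). -/
def Fml.predSyms (F : Fml) : Set ℕ := {p | ∃ b ts, (b, p, ts) ∈ F.lits}

/-- fun(F): the function symbols (including constants) occurring in `F`. -/
def Fml.funs : Fml → Set ℕ
  | .tru => ∅
  | .fls => ∅
  | .atom _ ts => {f | ∃ t ∈ ts, f ∈ Tm.funs t}
  | .neg F => F.funs
  | .and F G => F.funs ∪ G.funs
  | .or F G => F.funs ∪ G.funs
  | .all _ F => F.funs
  | .ex _ F => F.funs

/-- The free variables of a formula. -/
def Fml.fv : Fml → Set ℕ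
  | .tru => ∅
  | .fls => ∅
  | .atom _ ts => {x | ∃ t ∈ ts, x ∈ Tm.vars t}
  | .neg F => F.fv
  | .and F G => F.fv ∪ G.fv
  | .or F G => F.fv ∪ G.fv
  | .all x F => F.fv \ {x}
  | .ex x F => F.fv \ {x}

/-- The variables occurring bound in a formula. -/
def Fml.bv : Fml → Set ℕ
  | .tru => ∅
  | .fls => ∅
  | .atom _ _ => ∅
  | .neg F => F.bv
  | .and F G => F.bv ∪ G.bv
  | .or F G => F.bv ∪ G.bv
  | .all x F => insert x F.bv
  | .ex x F => insert x F.bv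

/-- All variables occurring in a formula (free or bound). -/
def Fml.varsSet : Fml → Set ℕ
  | .tru => ∅
  | .fls => ∅
  | .atom _ ts => {x | ∃ t ∈ ts, x ∈ Tm.vars t}
  | .neg F => F.varsSet
  | .and F G => F.varsSet ∪ G.varsSet
  | .or F G => F.varsSet ∪ G.varsSet
  | .all x F => insert x F.varsSet
  | .ex x F => insert x F.varsSet

/-- Quantifier-free formulas. -/
def Fml.qfree : Fml → Prop
  | .tru => True
  | .fls => True
  | .atom _ _ => True
  | .neg F => F.qfree
  | .and F G => F.qfree ∧ G.qfree
  | .or F G => F.qfree ∧ G.qfree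
  | .all _ _ => False
  | .ex _ _ => False

/-- Ground formulas: quantifier-free and without variables. -/
def Fml.isGround : Fml → Prop
  | .tru => True
  | .fls => True
  | .atom _ ts => ∀ t ∈ ts, Tm.vars t = []
  | .neg F => F.isGround
  | .and F G => F.isGround ∧ G.isGround
  | .or F G => F.isGround ∧ G.isGround
  | .all _ _ => False
  | .ex _ _ => False

end CTI

namespace CTI

/-! ### Literals, clauses, clausal formulas -/

/-- A literal: a polarity (`true` = positive atom, `false` = negated atom),
a predicate symbol and an argument list. -/
abbrev Lit := Bool × ℕ × List Tm

/-- A clause: a finite disjunction of literals, as a list. -/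
abbrev Clause := List Lit

/-- A clausal formula: a finite conjunction of clauses, as a list. -/
abbrev CForm := List Clause

/-- The complement of a literal. -/
def litCompl (l : Lit) : Lit := (!l.1, l.2.1, l.2.2)

/-- The formula corresponding to a literal. -/
def litFml (l : Lit) : Fml := if l.1 then .atom l.2.1 l.2.2 else .neg (.atom l.2.1 l.2.2)

/-- The formula corresponding to a clause (disjunction of its literals). -/
def clauseFml (C : Clause) : Fml := C.foldr (fun l F => .or (litFml l) F) .fls

/-- The formula corresponding to a clausal formula (conjunction of its clauses). -/
def cformFml (cs : CForm) : Fml := cs.foldr (fun C F => .and (clauseFml C) F) .tru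

def litGround (l : Lit) : Prop := ∀ t ∈ l.2.2, Tm.vars t = []
def clauseGround (C : Clause) : Prop := ∀ l ∈ C, litGround l
def cformGround (cs : CForm) : Prop := ∀ C ∈ cs, clauseGround C

/-- The function symbols occurring in a clausal formula. -/
def cformFuns (cs : CForm) : Set ℕ := {f | ∃ C ∈ cs, ∃ l ∈ C, ∃ t ∈ l.2.2, f ∈ Tm.funs t}

/-- Application of a substitution to a term. -/
def Tm.applySub (σ : ℕ → Tm) : Tm → Tm
  | .var x => σ x
  | .fn f ts => .fn f (ts.attach.map (fun t => Tm.applySub σ t.1))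
decreasing_by
  have h := List.sizeOf_lt_of_mem t.2; simp_wf; omega

/-- Application of a substitution to a literal. -/
def litSub (σ : ℕ → Tm) (l : Lit) : Lit := (l.1, l.2.1, l.2.2.map (Tm.applySub σ))

/-- `C` is a substitution instance of the clause `D`. -/
def instClause (C D : Clause) : Prop := ∃ σ : ℕ → Tm, C = D.map (litSub σ)

/-- The subterm relation: `Subt s t` iff `s` occurs as a subterm of `t`. -/
inductive Subt : Tm → Tm → Prop
  | refl (t) : Subt t t
  | step {s u} (f : ℕ) (ts : List Tm) : u ∈ ts → Subt s u → Subt s (.fn f ts)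

/-- Strict subterm relation. -/
def StrictSubt (s t : Tm) : Prop := Subt s t ∧ s ≠ t

/-- `Tm.builtFrom S C t`: `t` is a ground term built from function symbols in `S`,
where the symbols in `C` may additionally be used as constants. -/
inductive Tm.builtFrom (S C : Set ℕ) : Tm → Prop
  | app {f : ℕ} {ts : List Tm} : f ∈ S → (∀ t ∈ ts, Tm.builtFrom S C t) →
      Tm.builtFrom S C (.fn f ts)
  | cst {c : ℕ} : c ∈ C → Tm.builtFrom S C (.fn c [])

/-! ### Clausal tableaux -/

/-- A node of a clausal tableau: a literal label, a side label
(`true` = red/left, `false` = blue/right; ignored for one-sided tableaux)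
and the list of children in left-to-right order.  A whole tableau is the
list of children of the (unlabeled) root. -/
inductive Tab : Type where
  | node : Lit → Bool → List Tab → Tab

def Tab.lit : Tab → Lit | .node l _ _ => l
def Tab.side : Tab → Bool | .node _ s _ => s
def Tab.children : Tab → List Tab | .node _ _ cs => cs

/-- The subtrees of a clausal tableau (given as list of children of the root)
together with the branch of (literal, side) pairs of their strict ancestors,
innermost first. -/
inductive OccIn (T : List Tab) : List (Lit × Bool) → Tab → Prop
  | top {t} : t ∈ T → OccIn T [] t
  | step {br l s cs c} : OccIn T br (.node l s cs) → c ∈ cs → OccIn T ((l, s) :: br) c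

/-- Well-formedness of a (one-sided) clausal tableau below some node, for the
clausal formula `F`: the children of every node either are absent or their
literal labels form an instance of a clause in `F`. -/
inductive TabFor (F : CForm) : Tab → Prop
  | mk {l s cs} : (cs = [] ∨ ∃ D ∈ F, instClause (cs.map Tab.lit) D) →
      (∀ c ∈ cs, TabFor F c) → TabFor F (.node l s cs)

/-- A clausal tableau for the clausal formula `F`. -/
def TableauFor (F : CForm) (T : List Tab) : Prop :=
  (T = [] ∨ ∃ D ∈ F, instClause (T.map Tab.lit) D) ∧ ∀ t ∈ T, TabFor F t

/-- Closedness of the subtree rooted at a node whose strict ancestors carry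
the literals in `br`: every leaf has an ancestor labeled with its complement. -/
inductive ClosedFrom : List Lit → Tab → Prop
  | leaf {br : List Lit} {l s} : litCompl l ∈ br → ClosedFrom br (.node l s [])
  | inner {br : List Lit} {l s cs} : cs ≠ [] → (∀ c ∈ cs, ClosedFrom (l :: br) c) →
      ClosedFrom br (.node l s cs)

/-- A closed clausal tableau: all leaves are closed (the root, being unlabeled,
must have children). -/
def ClosedTableau (T : List Tab) : Prop := T ≠ [] ∧ ∀ t ∈ T, ClosedFrom [] t

/-- All nodes of a subtree satisfy `P`. -/
inductive TabAll (P : Tab → Prop) : Tab → Prop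
  | mk {l s cs} : P (.node l s cs) → (∀ c ∈ cs, TabAll P c) → TabAll P (.node l s cs)

/-! ### Two-sided clausal tableaux and interpolant extraction -/

/-- Well-formedness of a two-sided clausal tableau below a node, for clausal
formulas `Fr` (side `true` = red) and `Fb` (side `false` = blue):
siblings have the same side, and the literal labels of the children of any
node form an instance of a clause of the formula of their side. -/
inductive TwoTabFor (Fr Fb : CForm) : Tab → Prop
  | mk {l s cs} :
      (cs = [] ∨ ∃ b : Bool, (∀ c ∈ cs, Tab.side c = b) ∧
        ∃ D ∈ (if b then Fr else Fb), instClause (cs.map Tab.lit) D) →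
      (∀ c ∈ cs, TwoTabFor Fr Fb c) → TwoTabFor Fr Fb (.node l s cs)

/-- A two-sided clausal tableau for `Fr` and `Fb`. -/
def TwoTableauFor (Fr Fb : CForm) (T : List Tab) : Prop :=
  (T = [] ∨ ∃ b : Bool, (∀ c ∈ T, Tab.side c = b) ∧
    ∃ D ∈ (if b then Fr else Fb), instClause (T.map Tab.lit) D)
  ∧ ∀ t ∈ T, TwoTabFor Fr Fb t

/-- Closedness, with the branch carrying side labels. -/
inductive SClosedFrom : List (Lit × Bool) → Tab → Prop
  | leaf {br : List (Lit × Bool)} {l s} : (∃ s', (litCompl l, s') ∈ br) →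
      SClosedFrom br (.node l s [])
  | inner {br : List (Lit × Bool)} {l s cs} : cs ≠ [] →
      (∀ c ∈ cs, SClosedFrom ((l, s) :: br) c) → SClosedFrom br (.node l s cs)

/-- The value of ipol at a closed leaf, determined by the side `s` of the leaf
and the side `ts` of its target, from the literal label `l`. -/
def leafIpol (s ts : Bool) (l : Lit) : Fml :=
  match s, ts with
  | true, true => .fls
  | true, false => litFml l
  | false, true => litFml (litCompl l)
  | false, false => .tru

/-- `Ipol br t H`: `H` is a value of ipol at the node `t` whose branch of strict
ancestors (with sides) is `br`, for some association of targets to closed leaves.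
At a leaf, the target is an ancestor labeled with the complement of the leaf's
literal; at an inner node, ipol is the disjunction (side red) or conjunction
(side blue) of the values at the children. -/
inductive Ipol : List (Lit × Bool) → Tab → Fml → Prop
  | leaf {br l s ts} : (litCompl l, ts) ∈ br →
      Ipol br (.node l s []) (leafIpol s ts l)
  | innerR {br l s cs Hs} : cs ≠ [] → (∀ c ∈ cs, Tab.side c = true) →
      cs.length = Hs.length →
      (∀ p ∈ List.zip cs Hs, Ipol ((l, s) :: br) p.1 p.2) →
      Ipol br (.node l s cs) (Hs.foldr .or .fls)
  | innerB {br l s cs Hs} : cs ≠ [] → (∀ c ∈ cs, Tab.side c = false) →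
      cs.length = Hs.length →
      (∀ p ∈ List.zip cs Hs, Ipol ((l, s) :: br) p.1 p.2) →
      Ipol br (.node l s cs) (Hs.foldr .and .tru)

/-- `IpolRoot T H`: `H` is a value of ipol at the root of the tableau `T`. -/
inductive IpolRoot : List Tab → Fml → Prop
  | rootR {T Hs} : T ≠ [] → (∀ t ∈ T, Tab.side t = true) →
      T.length = Hs.length → (∀ p ∈ List.zip T Hs, Ipol [] p.1 p.2) →
      IpolRoot T (Hs.foldr .or .fls)
  | rootB {T Hs} : T ≠ [] → (∀ t ∈ T, Tab.side t = false) →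
      T.length = Hs.length → (∀ p ∈ List.zip T Hs, Ipol [] p.1 p.2) →
      IpolRoot T (Hs.foldr .and .tru)

/-- branch_S(N): the conjunction of the literals with side `s` on the branch `br`. -/
def branchFml (s : Bool) (br : List (Lit × Bool)) : Fml :=
  ((br.filter (fun p => p.2 == s)).map (fun p => litFml p.1)).foldr .and .tru

end CTI

namespace CTI

/-! ### Auxiliary lemmas -/

theorem Tm.applySub_eq_of_ground (σ : ℕ → Tm) : ∀ t : Tm, t.vars = [] → Tm.applySub σ t = t
  | .var _, h => by simp [Tm.vars] at h
  | .fn f ts, h => by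
      rw [Tm.applySub]
      have hg : ∀ t ∈ ts, Tm.vars t = [] := by
        intro t ht
        rw [Tm.vars, List.flatten_eq_nil_iff] at h
        exact h _ (List.mem_map_of_mem (List.mem_attach ts ⟨t, ht⟩))
      have hmap : ts.attach.map (fun t => Tm.applySub σ t.1)
          = ts.attach.map (fun t => t.1) := by
        apply List.map_congr_left
        intro t _
        exact Tm.applySub_eq_of_ground σ t.1 (hg t.1 t.2)
      rw [hmap, List.attach_map_subtype_val]
decreasing_by
  have h := List.sizeOf_lt_of_mem t.2; simp_wf; omega

theorem litSub_eq_of_ground (σ : ℕ → Tm) (l : Lit) (h : litGround l) : litSub σ l = l := by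
  obtain ⟨b, p, ts⟩ := l
  simp only [litSub]
  refine congrArg _ (congrArg _ ?_)
  conv_rhs => rw [← List.map_id ts]
  exact List.map_congr_left fun t ht => Tm.applySub_eq_of_ground σ t (h t ht)

theorem instClause_eq_of_ground {C D : Clause} (h : instClause C D) (hg : clauseGround D) :
    C = D := by
  obtain ⟨σ, rfl⟩ := h
  conv_rhs => rw [← List.map_id D]
  exact List.map_congr_left fun l hl => litSub_eq_of_ground σ l (hg l hl)

/-! ### Semantics helpers -/

theorem holds_foldr_or {D : Type} (I : Interp D) (a : ℕ → D) (L : List Fml) :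
    Fml.holds I a (L.foldr .or .fls) ↔ ∃ F ∈ L, Fml.holds I a F := by
  induction L with
  | nil => simp [Fml.holds]
  | cons F L ih => simp [Fml.holds, ih]

theorem holds_foldr_and {D : Type} (I : Interp D) (a : ℕ → D) (L : List Fml) :
    Fml.holds I a (L.foldr .and .tru) ↔ ∀ F ∈ L, Fml.holds I a F := by
  induction L with
  | nil => simp [Fml.holds]
  | cons F L ih => simp [Fml.holds, ih]

theorem holds_litCompl {D : Type} (I : Interp D) (a : ℕ → D) (l : Lit) :
    Fml.holds I a (litFml (litCompl l)) ↔ ¬ Fml.holds I a (litFml l) := by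
  obtain ⟨b, p, ts⟩ := l
  cases b <;> simp [litFml, litCompl, Fml.holds]

theorem clauseFml_eq (C : Clause) : clauseFml C = (C.map litFml).foldr .or .fls := by
  induction C with
  | nil => rfl
  | cons l C ih => rw [List.map_cons, List.foldr_cons, ← ih]; rfl

theorem cformFml_eq (cs : CForm) : cformFml cs = (cs.map clauseFml).foldr .and .tru := by
  induction cs with
  | nil => rfl
  | cons C cs ih => rw [List.map_cons, List.foldr_cons, ← ih]; rfl

theorem holds_clauseFml {D : Type} (I : Interp D) (a : ℕ → D) (C : Clause) :
    Fml.holds I a (clauseFml C) ↔ ∃ l ∈ C, Fml.holds I a (litFml l) := by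
  rw [clauseFml_eq, holds_foldr_or]
  constructor
  · rintro ⟨F, hF, h⟩
    obtain ⟨l, hl, rfl⟩ := List.mem_map.mp hF
    exact ⟨l, hl, h⟩
  · rintro ⟨l, hl, h⟩
    exact ⟨_, List.mem_map_of_mem hl, h⟩

theorem holds_cformFml {D : Type} (I : Interp D) (a : ℕ → D) (cs : CForm) :
    Fml.holds I a (cformFml cs) ↔ ∀ C ∈ cs, Fml.holds I a (clauseFml C) := by
  rw [cformFml_eq, holds_foldr_and]
  constructor
  · intro h C hC
    exact h _ (List.mem_map_of_mem hC)
  · rintro h F hF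
    obtain ⟨C, hC, rfl⟩ := List.mem_map.mp hF
    exact h C hC

theorem holds_branchFml {D : Type} (I : Interp D) (a : ℕ → D) (s : Bool)
    (br : List (Lit × Bool)) :
    Fml.holds I a (branchFml s br) ↔ ∀ p ∈ br, p.2 = s → Fml.holds I a (litFml p.1) := by
  rw [branchFml, holds_foldr_and]
  constructor
  · intro h p hp hs
    exact h _ (List.mem_map_of_mem (List.mem_filter.mpr ⟨hp, by simp [hs]⟩))
  · rintro h F hF
    obtain ⟨p, hp, rfl⟩ := List.mem_map.mp hF
    obtain ⟨hp, hps⟩ := List.mem_filter.mp hp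
    exact h p hp (by simpa using hps)

theorem branchFml_cons (s s' : Bool) (l : Lit) (br : List (Lit × Bool)) :
    branchFml s ((l, s') :: br) =
      if s' = s then .and (litFml l) (branchFml s br) else branchFml s br := by
  cases s <;> cases s' <;> simp [branchFml, List.filter_cons]

/-! ### lits helpers -/

theorem litsP_foldr_or (pol : Bool) (L : List Fml) (x : Lit) :
    x ∈ Fml.litsP pol (L.foldr .or .fls) ↔ ∃ F ∈ L, x ∈ Fml.litsP pol F := by
  induction L with
  | nil => simp [Fml.litsP]
  | cons F L ih => simp [Fml.litsP, ih]

theorem litsP_foldr_and (pol : Bool) (L : List Fml) (x : Lit) :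
    x ∈ Fml.litsP pol (L.foldr .and .tru) ↔ ∃ F ∈ L, x ∈ Fml.litsP pol F := by
  induction L with
  | nil => simp [Fml.litsP]
  | cons F L ih => simp [Fml.litsP, ih]

theorem litsP_litFml (pol : Bool) (l : Lit) :
    Fml.litsP pol (litFml l) = {((pol == l.1), l.2.1, l.2.2)} := by
  obtain ⟨b, p, ts⟩ := l
  cases pol <;> cases b <;> simp [litFml, Fml.litsP]

theorem mem_litsP_cformFml {pol : Bool} {cs : CForm} {C : Clause} {l : Lit}
    (hC : C ∈ cs) (hl : l ∈ C) :
    ((pol == l.1), l.2.1, l.2.2) ∈ Fml.litsP pol (cformFml cs) := by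
  rw [cformFml_eq, litsP_foldr_and]
  refine ⟨clauseFml C, List.mem_map_of_mem hC, ?_⟩
  rw [clauseFml_eq, litsP_foldr_or]
  exact ⟨litFml l, List.mem_map_of_mem hl, by rw [litsP_litFml]; rfl⟩

theorem mem_litsP_branchFml {pol : Bool} {s : Bool} {br : List (Lit × Bool)} {x : Lit} :
    x ∈ Fml.litsP pol (branchFml s br) ↔
      ∃ p ∈ br, p.2 = s ∧ x ∈ Fml.litsP pol (litFml p.1) := by
  rw [branchFml, litsP_foldr_and]
  constructor
  · rintro ⟨F, hF, h⟩
    obtain ⟨p, hp, rfl⟩ := List.mem_map.mp hF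
    obtain ⟨hp, hps⟩ := List.mem_filter.mp hp
    exact ⟨p, hp, by simpa using hps, h⟩
  · rintro ⟨p, hp, hs, h⟩
    exact ⟨_, List.mem_map_of_mem (List.mem_filter.mpr ⟨hp, by simp [hs]⟩), h⟩

/-! ### Tableau helpers -/

theorem twoTabFor_of_occIn {Fr Fb : CForm} {T : List Tab} {br : List (Lit × Bool)} {t : Tab}
    (h : ∀ t ∈ T, TwoTabFor Fr Fb t) (ho : OccIn T br t) : TwoTabFor Fr Fb t := by
  induction ho with
  | top ht => exact h _ ht
  | step _ hc ih => cases ih with | mk _ h2 => exact h2 _ hc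

theorem exists_zip_right {α β : Type*} {cs : List α} {Hs : List β}
    (hlen : cs.length = Hs.length) {c : α} (hc : c ∈ cs) :
    ∃ H ∈ Hs, (c, H) ∈ cs.zip Hs := by
  obtain ⟨i, hi, rfl⟩ := List.getElem_of_mem hc
  refine ⟨Hs[i]'(hlen ▸ hi), List.getElem_mem _, ?_⟩
  have : i < (cs.zip Hs).length := by simp [List.length_zip]; omega
  have := List.getElem_mem this
  rwa [List.getElem_zip] at this

theorem exists_zip_left {α β : Type*} {cs : List α} {Hs : List β}
    (hlen : cs.length = Hs.length) {H : β} (hH : H ∈ Hs) :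
    ∃ c ∈ cs, (c, H) ∈ cs.zip Hs := by
  obtain ⟨i, hi, rfl⟩ := List.getElem_of_mem hH
  refine ⟨cs[i]'(hlen ▸ hi), List.getElem_mem _, ?_⟩
  have : i < (cs.zip Hs).length := by simp [List.length_zip]; omega
  have := List.getElem_mem this
  rwa [List.getElem_zip] at this

end CTI

namespace CTI

theorem lits_eq (F : Fml) : Fml.lits F = Fml.litsP true F := rfl

theorem holds_and {D : Type} (I : Interp D) (a : ℕ → D) (F G : Fml) :
    Fml.holds I a (.and F G) ↔ Fml.holds I a F ∧ Fml.holds I a G := by simp [Fml.holds]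

theorem holds_or {D : Type} (I : Interp D) (a : ℕ → D) (F G : Fml) :
    Fml.holds I a (.or F G) ↔ Fml.holds I a F ∨ Fml.holds I a G := by simp [Fml.holds]

theorem holds_neg {D : Type} (I : Interp D) (a : ℕ → D) (F : Fml) :
    Fml.holds I a (.neg F) ↔ ¬ Fml.holds I a F := by simp [Fml.holds]

theorem branchFml_tt (l : Lit) (br : List (Lit × Bool)) :
    branchFml true ((l, true) :: br) = .and (litFml l) (branchFml true br) := by
  simp [branchFml, List.filter_cons]

theorem branchFml_ff (l : Lit) (br : List (Lit × Bool)) :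
    branchFml false ((l, false) :: br) = .and (litFml l) (branchFml false br) := by
  simp [branchFml, List.filter_cons]

theorem branchFml_tf (l : Lit) (br : List (Lit × Bool)) :
    branchFml true ((l, false) :: br) = branchFml true br := by
  simp [branchFml, List.filter_cons]

theorem branchFml_ft (l : Lit) (br : List (Lit × Bool)) :
    branchFml false ((l, true) :: br) = branchFml false br := by
  simp [branchFml, List.filter_cons]

/-- The main invariant, proved by induction on the `Ipol` derivation. -/
theorem ipol_good (Fr Fb : CForm) (hgFr : cformGround Fr) (hgFb : cformGround Fb) :
    ∀ {br : List (Lit × Bool)} {t : Tab} {H : Fml}, Ipol br t H → TwoTabFor Fr Fb t →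
      (Entails (.and (cformFml Fr) (branchFml true ((Tab.lit t, Tab.side t) :: br))) H
       ∧ Entails H (.or (.neg (cformFml Fb))
           (.neg (branchFml false ((Tab.lit t, Tab.side t) :: br)))))
      ∧ Fml.lits H ⊆
          Fml.lits (.and (cformFml Fr) (branchFml true ((Tab.lit t, Tab.side t) :: br)))
          ∩ Fml.lits (.or (.neg (cformFml Fb))
              (.neg (branchFml false ((Tab.lit t, Tab.side t) :: br)))) := by
  intro br t H hip
  induction hip with
  | @leaf br l s ts hmem =>
    intro _
    simp only [Tab.lit, Tab.side]
    cases s <;> cases ts <;> simp only [leafIpol]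
    -- s = false, ts = false : H = ⊤
    · refine ⟨⟨?_, ?_⟩, ?_⟩
      · intro Dom hDom I a _; exact trivial
      · intro Dom hDom I a _
        refine Or.inr ?_
        rw [holds_neg, branchFml_ff, holds_and]
        rintro ⟨hl, hbr⟩
        exact (holds_litCompl I a l).mp
          ((holds_branchFml I a false br).mp hbr _ hmem rfl) hl
      · intro x hx; exact absurd hx (by simp [lits_eq, Fml.litsP])
    -- s = false, ts = true : H = litFml (litCompl l)
    · refine ⟨⟨?_, ?_⟩, ?_⟩
      · intro Dom hDom I a h
        rw [holds_and, branchFml_tf] at h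
        exact (holds_branchFml I a true br).mp h.2 _ hmem rfl
      · intro Dom hDom I a h
        refine Or.inr ?_
        rw [holds_neg, branchFml_ff, holds_and]
        rintro ⟨hl, _⟩
        exact (holds_litCompl I a l).mp h hl
      · intro x hx
        rw [lits_eq, litsP_litFml] at hx
        rw [Set.mem_singleton_iff] at hx
        subst hx
        constructor
        · simp only [lits_eq, Fml.litsP, branchFml_tf]
          refine Or.inr (mem_litsP_branchFml.mpr ⟨(litCompl l, true), hmem, rfl, ?_⟩)
          rw [litsP_litFml]; rfl
        · simp only [lits_eq, Fml.litsP, branchFml_ff]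
          refine Or.inr (Or.inl ?_)
          rw [litsP_litFml, Set.mem_singleton_iff]
          obtain ⟨b, p, args⟩ := l
          cases b <;> rfl
    -- s = true, ts = false : H = litFml l
    · refine ⟨⟨?_, ?_⟩, ?_⟩
      · intro Dom hDom I a h
        rw [holds_and, branchFml_tt, holds_and] at h
        exact h.2.1
      · intro Dom hDom I a h
        refine Or.inr ?_
        rw [holds_neg, branchFml_ft]
        intro hbr
        exact (holds_litCompl I a l).mp
          ((holds_branchFml I a false br).mp hbr _ hmem rfl) h
      · intro x hx
        rw [lits_eq, litsP_litFml, Set.mem_singleton_iff] at hx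
        subst hx
        constructor
        · simp only [lits_eq, Fml.litsP, branchFml_tt]
          refine Or.inr (Or.inl ?_)
          rw [litsP_litFml]; rfl
        · simp only [lits_eq, Fml.litsP, branchFml_ft]
          refine Or.inr (mem_litsP_branchFml.mpr ⟨(litCompl l, false), hmem, rfl, ?_⟩)
          rw [litsP_litFml, Set.mem_singleton_iff]
          obtain ⟨b, p, args⟩ := l
          cases b <;> rfl
    -- s = true, ts = true : H = ⊥
    · refine ⟨⟨?_, ?_⟩, ?_⟩
      · intro Dom hDom I a h
        rw [holds_and, branchFml_tt, holds_and] at h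
        exact absurd h.2.1 ((holds_litCompl I a l).mp
          ((holds_branchFml I a true br).mp h.2.2 _ hmem rfl))
      · intro Dom hDom I a h; exact absurd h (by simp [Fml.holds])
      · intro x hx; exact absurd hx (by simp [lits_eq, Fml.litsP])
  | @innerR br l s cs Hs hne hside hlen hips ih =>
    rintro ⟨hcl, hch⟩
    obtain ⟨c0, hc0⟩ := List.exists_mem_of_ne_nil cs hne
    rcases hcl with h0 | ⟨b, hsb, D, hD, hinst⟩
    · rw [h0] at hc0; exact absurd hc0 List.not_mem_nil
    have hb : b = true := (hsb c0 hc0).symm.trans (hside c0 hc0)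
    subst hb
    rw [if_pos rfl] at hD
    have hclause : cs.map Tab.lit = D := instClause_eq_of_ground hinst (hgFr D hD)
    have IH : ∀ c Hc, (c, Hc) ∈ cs.zip Hs →
        (Entails (.and (cformFml Fr)
            (branchFml true ((Tab.lit c, Tab.side c) :: (l, s) :: br))) Hc
         ∧ Entails Hc (.or (.neg (cformFml Fb))
             (.neg (branchFml false ((Tab.lit c, Tab.side c) :: (l, s) :: br)))))
        ∧ Fml.lits Hc ⊆
            Fml.lits (.and (cformFml Fr)
              (branchFml true ((Tab.lit c, Tab.side c) :: (l, s) :: br)))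
            ∩ Fml.lits (.or (.neg (cformFml Fb))
                (.neg (branchFml false ((Tab.lit c, Tab.side c) :: (l, s) :: br)))) :=
      fun c Hc hp => ih (c, Hc) hp (hch c (List.of_mem_zip hp).1)
    simp only [Tab.lit, Tab.side]
    refine ⟨⟨?_, ?_⟩, ?_⟩
    · intro Dom hDom I a h
      rw [holds_and] at h
      obtain ⟨hFr, hbr⟩ := h
      obtain ⟨lt, hltD, hhl⟩ := (holds_clauseFml I a D).mp
        ((holds_cformFml I a Fr).mp hFr D hD)
      rw [← hclause] at hltD
      obtain ⟨c, hc, rfl⟩ := List.mem_map.mp hltD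
      obtain ⟨Hc, hHc, hpz⟩ := exists_zip_right hlen hc
      rw [holds_foldr_or]
      refine ⟨Hc, hHc, (IH c Hc hpz).1.1 Dom hDom I a ?_⟩
      rw [holds_and, hside c hc, branchFml_tt, holds_and]
      exact ⟨hFr, hhl, hbr⟩
    · intro Dom hDom I a h
      rw [holds_foldr_or] at h
      obtain ⟨Hc, hHc, hh⟩ := h
      obtain ⟨c, hc, hpz⟩ := exists_zip_left hlen hHc
      have h2 := (IH c Hc hpz).1.2 Dom hDom I a hh
      rwa [hside c hc, branchFml_ft] at h2
    · intro x hx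
      rw [lits_eq, litsP_foldr_or] at hx
      obtain ⟨Hc, hHc, hx⟩ := hx
      obtain ⟨c, hc, hpz⟩ := exists_zip_left hlen hHc
      obtain ⟨hxl, hxr⟩ := (IH c Hc hpz).2 hx
      constructor
      · rw [hside c hc, branchFml_tt] at hxl
        simp only [lits_eq, Fml.litsP] at hxl ⊢
        rcases hxl with h | h | h
        · exact Or.inl h
        · rw [litsP_litFml, Set.mem_singleton_iff] at h
          subst h
          exact Or.inl (mem_litsP_cformFml hD
            (hclause ▸ List.mem_map_of_mem (f := Tab.lit) hc))
        · exact Or.inr h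
      · rwa [hside c hc, branchFml_ft] at hxr
  | @innerB br l s cs Hs hne hside hlen hips ih =>
    rintro ⟨hcl, hch⟩
    obtain ⟨c0, hc0⟩ := List.exists_mem_of_ne_nil cs hne
    rcases hcl with h0 | ⟨b, hsb, D, hD, hinst⟩
    · rw [h0] at hc0; exact absurd hc0 List.not_mem_nil
    have hb : b = false := (hsb c0 hc0).symm.trans (hside c0 hc0)
    subst hb
    rw [if_neg (by simp)] at hD
    have hclause : cs.map Tab.lit = D := instClause_eq_of_ground hinst (hgFb D hD)
    have IH : ∀ c Hc, (c, Hc) ∈ cs.zip Hs →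
        (Entails (.and (cformFml Fr)
            (branchFml true ((Tab.lit c, Tab.side c) :: (l, s) :: br))) Hc
         ∧ Entails Hc (.or (.neg (cformFml Fb))
             (.neg (branchFml false ((Tab.lit c, Tab.side c) :: (l, s) :: br)))))
        ∧ Fml.lits Hc ⊆
            Fml.lits (.and (cformFml Fr)
              (branchFml true ((Tab.lit c, Tab.side c) :: (l, s) :: br)))
            ∩ Fml.lits (.or (.neg (cformFml Fb))
                (.neg (branchFml false ((Tab.lit c, Tab.side c) :: (l, s) :: br)))) :=
      fun c Hc hp => ih (c, Hc) hp (hch c (List.of_mem_zip hp).1)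
    simp only [Tab.lit, Tab.side]
    refine ⟨⟨?_, ?_⟩, ?_⟩
    · intro Dom hDom I a h
      rw [holds_foldr_and]
      intro Hc hHc
      obtain ⟨c, hc, hpz⟩ := exists_zip_left hlen hHc
      refine (IH c Hc hpz).1.1 Dom hDom I a ?_
      rwa [hside c hc, branchFml_tf]
    · intro Dom hDom I a h
      by_cases hFb : Fml.holds I a (cformFml Fb)
      · refine Or.inr ?_
        rw [holds_neg]
        intro hbb
        obtain ⟨lt, hltD, hhl⟩ := (holds_clauseFml I a D).mp
          ((holds_cformFml I a Fb).mp hFb D hD)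
        rw [← hclause] at hltD
        obtain ⟨c, hc, rfl⟩ := List.mem_map.mp hltD
        obtain ⟨Hc, hHc, hpz⟩ := exists_zip_right hlen hc
        have hh : Fml.holds I a Hc := (holds_foldr_and I a Hs).mp h Hc hHc
        have h2 := (IH c Hc hpz).1.2 Dom hDom I a hh
        rw [hside c hc, branchFml_ff] at h2
        rcases h2 with h2 | h2
        · exact (holds_neg I a _).mp h2 hFb
        · exact (holds_neg I a _).mp h2 ((holds_and I a _ _).mpr ⟨hhl, hbb⟩)
      · exact Or.inl hFb
    · intro x hx
      rw [lits_eq, litsP_foldr_and] at hx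
      obtain ⟨Hc, hHc, hx⟩ := hx
      obtain ⟨c, hc, hpz⟩ := exists_zip_left hlen hHc
      obtain ⟨hxl, hxr⟩ := (IH c Hc hpz).2 hx
      constructor
      · rwa [hside c hc, branchFml_tf] at hxl
      · rw [hside c hc, branchFml_ff] at hxr
        simp only [lits_eq, Fml.litsP] at hxr ⊢
        rcases hxr with h | h | h
        · exact Or.inl h
        · rw [litsP_litFml, Set.mem_singleton_iff] at h
          subst h
          exact Or.inl (mem_litsP_cformFml hD
            (hclause ▸ List.mem_map_of_mem (f := Tab.lit) hc))
        · exact Or.inr h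

/-- correctness invariant of ground interpolant extraction from a
closed two-sided clausal ground tableau. -/
theorem ground_ipol_invariant (Fr Fb : CForm) (T : List Tab)
    (hgFr : cformGround Fr) (hgFb : cformGround Fb)
    (htab : TwoTableauFor Fr Fb T)
    (hgT : ∀ br t, OccIn T br t → litGround (Tab.lit t))
    (hclosed : ∀ t ∈ T, SClosedFrom [] t) :
    ∀ br t, OccIn T br t → ∀ H, Ipol br t H →
      (Entails (.and (cformFml Fr) (branchFml true ((Tab.lit t, Tab.side t) :: br))) H
       ∧ Entails H (.or (.neg (cformFml Fb))
           (.neg (branchFml false ((Tab.lit t, Tab.side t) :: br)))))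
      ∧ Fml.lits H ⊆
          Fml.lits (.and (cformFml Fr) (branchFml true ((Tab.lit t, Tab.side t) :: br)))
          ∩ Fml.lits (.or (.neg (cformFml Fb))
              (.neg (branchFml false ((Tab.lit t, Tab.side t) :: br)))) := by
  intro br t ho H hip
  exact ipol_good Fr Fb hgFr hgFb hip (twoTabFor_of_occIn htab.2 ho)

end CTI
end

section
/- Let F_red and F_blue be clausal ground formulas such that F_red is Horn (each clause of F_red contains at most one positive literal), and let T be a closed two-sided clausal ground tableau for F_red and F_blue that is a positive hyper tableau. Then for every node N of T, the formula ipol(N) is equivalent to a ground Horn clausal formula; in particular, ipol(N) of the root is equivalent to a ground Horn clausal formula, obtainable from ipol(N) by distributing disjunction over conjunction. -/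
namespace CTI

/-- Regularity: no node has an ancestor with the same literal label. -/
def Regular (T : List Tab) : Prop :=
  ∀ br t, OccIn T br t → ∀ s' : Bool, (Tab.lit t, s') ∉ br

/-- Leaf-only for a set `S` of literals: members of `S` do not occur as literal
labels of inner nodes. -/
def LeafOnly (T : List Tab) (S : Set Lit) : Prop :=
  ∀ br t, OccIn T br t → Tab.children t ≠ [] → Tab.lit t ∉ S

/-- The literals occurring as literal labels in the tableau. -/
def labelsOf (T : List Tab) : Set Lit := {l | ∃ br t, OccIn T br t ∧ Tab.lit t = l}

/-- A positive hyper tableau: regular and leaf-only for the set of all negative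
literals occurring as literal labels in it. -/
def PositiveHyper (T : List Tab) : Prop :=
  Regular T ∧ LeafOnly T {l | l.1 = false ∧ l ∈ labelsOf T}

/-- A Horn clause: at most one positive literal. -/
def hornClause (C : Clause) : Prop := C.countP (fun l => l.1 == true) ≤ 1

/-- A Horn clausal formula. -/
def hornCForm (cs : CForm) : Prop := ∀ C ∈ cs, hornClause C
/-! ### Auxiliary lemmas -/

/-- All clauses all-negative. -/
def allNegCF (cs : CForm) : Prop := ∀ C ∈ cs, ∀ l ∈ C, l.1 = false

/-- Distribution of disjunction over two clausal formulas. -/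
def orCF (a b : CForm) : CForm := a.flatMap (fun C₁ => b.map (fun C₂ => C₁ ++ C₂))

lemma holds_cform {D : Type} (I : Interp D) (a : ℕ → D) (cs : CForm) :
    (cformFml cs).holds I a ↔ ∀ C ∈ cs, (clauseFml C).holds I a := by
  induction cs with
  | nil => simp [cformFml, Fml.holds]
  | cons C cs ih =>
    show (Fml.and (clauseFml C) (cformFml cs)).holds I a ↔ _
    simp [Fml.holds, ih]

lemma holds_clause {D : Type} (I : Interp D) (a : ℕ → D) (C : Clause) :
    (clauseFml C).holds I a ↔ ∃ l ∈ C, (litFml l).holds I a := by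
  induction C with
  | nil => simp [clauseFml, Fml.holds]
  | cons l C ih =>
    show (Fml.or (litFml l) (clauseFml C)).holds I a ↔ _
    simp [Fml.holds, ih]

lemma equivF_of_iff {F G : Fml}
    (h : ∀ (D : Type) (I : Interp D) (a : ℕ → D), F.holds I a ↔ G.holds I a) :
    EquivF F G :=
  ⟨fun D _ I a hF => (h D I a).1 hF, fun D _ I a hG => (h D I a).2 hG⟩

lemma holds_orCF {D : Type} (I : Interp D) (a : ℕ → D) (cs₁ cs₂ : CForm) :
    (cformFml (orCF cs₁ cs₂)).holds I a ↔
      (cformFml cs₁).holds I a ∨ (cformFml cs₂).holds I a := by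
  simp only [holds_cform]
  constructor
  · intro h
    by_cases h1 : ∀ C ∈ cs₁, (clauseFml C).holds I a
    · exact Or.inl h1
    · push_neg at h1
      obtain ⟨C₁, hC₁, hn⟩ := h1
      refine Or.inr fun C₂ hC₂ => ?_
      have := h (C₁ ++ C₂) (by simp [orCF]; exact ⟨C₁, hC₁, C₂, hC₂, rfl⟩)
      rw [holds_clause] at this
      obtain ⟨l, hl, hh⟩ := this
      rcases List.mem_append.1 hl with h' | h'
      · exact absurd ((holds_clause I a C₁).2 ⟨l, h', hh⟩) hn
      · exact (holds_clause I a C₂).2 ⟨l, h', hh⟩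
  · intro h C hC
    simp only [orCF, List.mem_flatMap, List.mem_map] at hC
    obtain ⟨C₁, hC₁, C₂, hC₂, rfl⟩ := hC
    rw [holds_clause]
    rcases h with h | h
    · obtain ⟨l, hl, hh⟩ := (holds_clause I a C₁).1 (h C₁ hC₁)
      exact ⟨l, List.mem_append.2 (Or.inl hl), hh⟩
    · obtain ⟨l, hl, hh⟩ := (holds_clause I a C₂).1 (h C₂ hC₂)
      exact ⟨l, List.mem_append.2 (Or.inr hl), hh⟩

lemma holds_append {D : Type} (I : Interp D) (a : ℕ → D) (cs₁ cs₂ : CForm) :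
    (cformFml (cs₁ ++ cs₂)).holds I a ↔
      (cformFml cs₁).holds I a ∧ (cformFml cs₂).holds I a := by
  simp only [holds_cform, List.mem_append]
  constructor
  · exact fun h => ⟨fun C hC => h C (Or.inl hC), fun C hC => h C (Or.inr hC)⟩
  · rintro ⟨h1, h2⟩ C (hC | hC)
    · exact h1 C hC
    · exact h2 C hC
lemma allNeg_horn {cs : CForm} (h : allNegCF cs) : hornCForm cs := by
  intro C hC
  have : C.countP (fun l => l.1 == true) = 0 :=
    List.countP_eq_zero.2 fun l hl => by simp [h C hC l hl]
  exact Nat.le_trans (Nat.le_of_eq this) (by omega)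

lemma ground_orCF {cs₁ cs₂ : CForm} (h1 : cformGround cs₁) (h2 : cformGround cs₂) :
    cformGround (orCF cs₁ cs₂) := by
  intro C hC
  simp only [orCF, List.mem_flatMap, List.mem_map] at hC
  obtain ⟨C₁, hC₁, C₂, hC₂, rfl⟩ := hC
  intro l hl
  rcases List.mem_append.1 hl with h' | h'
  · exact h1 C₁ hC₁ l h'
  · exact h2 C₂ hC₂ l h'

lemma allNeg_orCF {cs₁ cs₂ : CForm} (h1 : allNegCF cs₁) (h2 : allNegCF cs₂) :
    allNegCF (orCF cs₁ cs₂) := by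
  intro C hC
  simp only [orCF, List.mem_flatMap, List.mem_map] at hC
  obtain ⟨C₁, hC₁, C₂, hC₂, rfl⟩ := hC
  intro l hl
  rcases List.mem_append.1 hl with h' | h'
  · exact h1 C₁ hC₁ l h'
  · exact h2 C₂ hC₂ l h'

lemma countP_eq_zero_of_allNeg {C : Clause} (h : ∀ l ∈ C, l.1 = false) :
    C.countP (fun l => l.1 == true) = 0 :=
  List.countP_eq_zero.2 fun l hl => by simp [h l hl]

lemma horn_orCF_left {cs₁ cs₂ : CForm} (h1 : allNegCF cs₁) (h2 : hornCForm cs₂) :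
    hornCForm (orCF cs₁ cs₂) := by
  intro C hC
  simp only [orCF, List.mem_flatMap, List.mem_map] at hC
  obtain ⟨C₁, hC₁, C₂, hC₂, rfl⟩ := hC
  unfold hornClause
  rw [List.countP_append, countP_eq_zero_of_allNeg (h1 C₁ hC₁), Nat.zero_add]
  exact h2 C₂ hC₂

lemma horn_orCF_right {cs₁ cs₂ : CForm} (h1 : hornCForm cs₁) (h2 : allNegCF cs₂) :
    hornCForm (orCF cs₁ cs₂) := by
  intro C hC
  simp only [orCF, List.mem_flatMap, List.mem_map] at hC
  obtain ⟨C₁, hC₁, C₂, hC₂, rfl⟩ := hC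
  unfold hornClause
  rw [List.countP_append, countP_eq_zero_of_allNeg (h2 C₂ hC₂), Nat.add_zero]
  exact h1 C₁ hC₁
lemma equivF_lit (l : Lit) : EquivF (litFml l) (cformFml [[l]]) := by
  apply equivF_of_iff
  intro D I a
  rw [holds_cform]
  constructor
  · intro h C hC
    simp at hC; subst hC
    exact (holds_clause I a [l]).2 ⟨l, by simp, h⟩
  · intro h
    obtain ⟨l', hl', hh⟩ := (holds_clause I a [l]).1 (h [l] (by simp))
    simp at hl'; subst hl'; exact hh

lemma equivF_fls : EquivF Fml.fls (cformFml [[]]) := by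
  apply equivF_of_iff
  intro D I a
  rw [holds_cform]
  constructor
  · intro h; exact h.elim
  · intro h
    have := h [] (by simp)
    rw [holds_clause] at this
    simp at this

lemma equivF_tru : EquivF Fml.tru (cformFml []) := by
  apply equivF_of_iff
  intro D I a
  rw [holds_cform]
  simp [Fml.holds]

lemma equivF_or {F₁ F₂ G₁ G₂ : Fml} (h1 : EquivF F₁ G₁) (h2 : EquivF F₂ G₂) :
    EquivF (.or F₁ F₂) (.or G₁ G₂) := by
  constructor <;> intro D hD I a h <;>
    simp only [Fml.holds] at h ⊢
  · rcases h with h | h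
    · exact Or.inl (h1.1 D hD I a h)
    · exact Or.inr (h2.1 D hD I a h)
  · rcases h with h | h
    · exact Or.inl (h1.2 D hD I a h)
    · exact Or.inr (h2.2 D hD I a h)

lemma equivF_and {F₁ F₂ G₁ G₂ : Fml} (h1 : EquivF F₁ G₁) (h2 : EquivF F₂ G₂) :
    EquivF (.and F₁ F₂) (.and G₁ G₂) := by
  constructor <;> intro D hD I a h <;>
    simp only [Fml.holds] at h ⊢
  · exact ⟨h1.1 D hD I a h.1, h2.1 D hD I a h.2⟩
  · exact ⟨h1.2 D hD I a h.1, h2.2 D hD I a h.2⟩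

lemma equivF_trans {F G H : Fml} (h1 : EquivF F G) (h2 : EquivF G H) : EquivF F H :=
  ⟨fun D hD I a h => h2.1 D hD I a (h1.1 D hD I a h),
   fun D hD I a h => h1.2 D hD I a (h2.2 D hD I a h)⟩

lemma equivF_orCF {cs₁ cs₂ : CForm} :
    EquivF (.or (cformFml cs₁) (cformFml cs₂)) (cformFml (orCF cs₁ cs₂)) := by
  apply equivF_of_iff
  intro D I a
  rw [holds_orCF]
  simp only [Fml.holds]

lemma equivF_appendCF {cs₁ cs₂ : CForm} :
    EquivF (.and (cformFml cs₁) (cformFml cs₂)) (cformFml (cs₁ ++ cs₂)) := by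
  apply equivF_of_iff
  intro D I a
  rw [holds_append]
  simp only [Fml.holds]
lemma red_fold (ps : List (Tab × Fml))
    (h : ∀ p ∈ ps, ∃ cs : CForm, cformGround cs ∧ hornCForm cs ∧
        EquivF p.2 (cformFml cs) ∧ ((p.1.lit).1 = false → allNegCF cs)) :
    ∃ cs : CForm, cformGround cs ∧
      EquivF ((ps.map Prod.snd).foldr .or .fls) (cformFml cs) ∧
      (ps.countP (fun p => (p.1.lit).1 == true) = 0 → allNegCF cs) ∧
      (ps.countP (fun p => (p.1.lit).1 == true) ≤ 1 → hornCForm cs) := by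
  induction ps with
  | nil =>
    refine ⟨[[]], ?_, equivF_fls, ?_, ?_⟩
    · intro C hC; simp at hC; subst hC; intro l hl; simp at hl
    · intro _ C hC; simp at hC; subst hC; intro l hl; simp at hl
    · intro _; exact allNeg_horn (by intro C hC; simp at hC; subst hC; intro l hl; simp at hl)
  | cons p ps ih =>
    obtain ⟨cs₁, g1, h1, e1, n1⟩ := h p (List.mem_cons_self (a := p) (l := ps))
    obtain ⟨cs₂, g2, e2, n2, h2⟩ := ih (fun q hq => h q (List.mem_cons_of_mem p hq))
    refine ⟨orCF cs₁ cs₂, ground_orCF g1 g2, ?_, ?_, ?_⟩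
    · exact equivF_trans (equivF_or e1 e2) equivF_orCF
    · intro hc
      rw [List.countP_cons] at hc
      have hc2 : ps.countP (fun p => (p.1.lit).1 == true) = 0 := by omega
      have hneg : (p.1.lit).1 = false := by
        by_contra hx
        simp only [Bool.not_eq_false] at hx
        simp [hx] at hc
      exact allNeg_orCF (n1 hneg) (n2 hc2)
    · intro hc
      rw [List.countP_cons] at hc
      by_cases hpos : (p.1.lit).1 = true
      · rw [if_pos (by simp [hpos])] at hc
        have hc2 : ps.countP (fun p => (p.1.lit).1 == true) = 0 := by omega
        exact horn_orCF_right h1 (n2 hc2)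
      · have hneg : (p.1.lit).1 = false := by simpa using hpos
        have hc2 : ps.countP (fun p => (p.1.lit).1 == true) ≤ 1 := by omega
        exact horn_orCF_left (n1 hneg) (h2 hc2)

lemma blue_fold (ps : List (Tab × Fml))
    (h : ∀ p ∈ ps, ∃ cs : CForm, cformGround cs ∧ hornCForm cs ∧ EquivF p.2 (cformFml cs)) :
    ∃ cs : CForm, cformGround cs ∧ hornCForm cs ∧
      EquivF ((ps.map Prod.snd).foldr .and .tru) (cformFml cs) := by
  induction ps with
  | nil =>
    exact ⟨[], by intro C hC; simp at hC, by intro C hC; simp at hC, equivF_tru⟩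
  | cons p ps ih =>
    obtain ⟨cs₁, g1, h1, e1⟩ := h p (List.mem_cons_self (a := p) (l := ps))
    obtain ⟨cs₂, g2, h2, e2⟩ := ih (fun q hq => h q (List.mem_cons_of_mem p hq))
    refine ⟨cs₁ ++ cs₂, ?_, ?_, equivF_trans (equivF_and e1 e2) equivF_appendCF⟩
    · intro C hC; rcases List.mem_append.1 hC with h' | h'
      · exact g1 C h'
      · exact g2 C h'
    · intro C hC; rcases List.mem_append.1 hC with h' | h'
      · exact h1 C h'
      · exact h2 C h'
lemma twoTabFor_of_occ {Fr Fb : CForm} {T : List Tab}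
    (htab : TwoTableauFor Fr Fb T) :
    ∀ br t, OccIn T br t → TwoTabFor Fr Fb t := by
  intro br t h
  induction h with
  | top h => exact htab.2 _ h
  | step h hc ih =>
    cases ih with
    | mk h1 h2 => exact h2 _ hc

lemma countP_inst {C D : Clause} (h : instClause C D) :
    C.countP (fun l => l.1 == true) = D.countP (fun l => l.1 == true) := by
  obtain ⟨σ, rfl⟩ := h
  rw [List.countP_map]
  rfl

lemma count_le_of_inst {Fr : CForm} {D : Clause} {cs : List Tab}
    (hHorn : hornCForm Fr) (hD : D ∈ Fr) (hinst : instClause (cs.map Tab.lit) D) :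
    cs.countP (fun c => (Tab.lit c).1 == true) ≤ 1 := by
  have h1 : (cs.map Tab.lit).countP (fun l => l.1 == true) =
      cs.countP (fun c => (Tab.lit c).1 == true) := by
    rw [List.countP_map]; rfl
  rw [← h1, countP_inst hinst]
  exact hHorn D hD

lemma countP_zip_fst {cs : List Tab} {Hs : List Fml} (hlen : cs.length = Hs.length) :
    (List.zip cs Hs).countP (fun p => (p.1.lit).1 == true) =
      cs.countP (fun c => (Tab.lit c).1 == true) := by
  have := List.countP_map (p := fun c : Tab => (Tab.lit c).1 == true) (f := Prod.fst) (l := List.zip cs Hs)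
  rw [List.map_fst_zip (l₁ := cs) (l₂ := Hs) (le_of_eq hlen)] at this
  rw [this]
  rfl
lemma litGround_compl {l : Lit} (h : litGround l) : litGround (litCompl l) := h

lemma ipol_aux (Fr Fb : CForm) (T : List Tab)
    (hHorn : hornCForm Fr)
    (htab : TwoTableauFor Fr Fb T)
    (hgT : ∀ br t, OccIn T br t → litGround (Tab.lit t))
    (hhyper : PositiveHyper T) :
    ∀ br t H, Ipol br t H → OccIn T br t →
      ∃ cs : CForm, cformGround cs ∧ hornCForm cs ∧ EquivF H (cformFml cs) ∧
        (Tab.side t = true → (Tab.lit t).1 = false → allNegCF cs) := by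
  intro br t H hip
  induction hip with
  | @leaf br l s ts hmem =>
    intro hocc
    have hg : litGround l := hgT br _ hocc
    cases s <;> cases ts
    · -- s = false, ts = false : ⊤
      refine ⟨[], by intro C hC; simp at hC, by intro C hC; simp at hC, equivF_tru, ?_⟩
      intro hside; simp [Tab.side] at hside
    · -- s = false, ts = true : litFml (litCompl l)
      refine ⟨[[litCompl l]], ?_, ?_, equivF_lit _, ?_⟩
      · intro C hC; simp at hC; subst hC
        intro l' hl'; simp at hl'; subst hl'; exact litGround_compl hg
      · intro C hC; simp at hC; subst hC
        unfold hornClause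
        rw [List.countP_cons, List.countP_nil]
        split <;> omega
      · intro hside; simp [Tab.side] at hside
    · -- s = true, ts = false : litFml l
      refine ⟨[[l]], ?_, ?_, equivF_lit _, ?_⟩
      · intro C hC; simp at hC; subst hC
        intro l' hl'; simp at hl'; subst hl'; exact hg
      · intro C hC; simp at hC; subst hC
        unfold hornClause
        rw [List.countP_cons, List.countP_nil]
        split <;> omega
      · intro _ hneg C hC; simp at hC; subst hC
        intro l' hl'; simp at hl'; subst hl'
        simpa [Tab.lit] using hneg
    · -- s = true, ts = true : ⊥
      refine ⟨[[]], ?_, ?_, equivF_fls, ?_⟩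
      · intro C hC; simp at hC; subst hC; intro l' hl'; simp at hl'
      · intro C hC; simp at hC; subst hC
        unfold hornClause; simp
      · intro _ _ C hC; simp at hC; subst hC; intro l' hl'; simp at hl'
  | @innerR br l s cs Hs hne hsides hlen hzip ih =>
    intro hocc
    -- the node is inner, so its literal cannot be negative (positive hyper)
    have hnotneg : Tab.side (Tab.node l s cs) = true → (Tab.lit (Tab.node l s cs)).1 = false →
        False := by
      intro _ hneg
      exact hhyper.2 br _ hocc hne ⟨hneg, ⟨br, _, hocc, rfl⟩⟩
    -- horn bound on children
    have htf := twoTabFor_of_occ htab br _ hocc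
    have hcount : cs.countP (fun c => (Tab.lit c).1 == true) ≤ 1 := by
      cases htf with
      | mk h1 h2 =>
        rcases h1 with h1 | ⟨b, hb, D, hD, hinst⟩
        · exact absurd h1 hne
        · have hbt : b = true := by
            obtain ⟨c, hc⟩ := List.exists_mem_of_ne_nil cs hne
            rw [← hb c hc, hsides c hc]
          subst hbt
          simp only [if_pos rfl] at hD
          exact count_le_of_inst hHorn hD hinst
    have hyp : ∀ p ∈ List.zip cs Hs, ∃ cs : CForm, cformGround cs ∧ hornCForm cs ∧
        EquivF p.2 (cformFml cs) ∧ ((p.1.lit).1 = false → allNegCF cs) := by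
      intro p hp
      have hmem := List.of_mem_zip (a := p.1) (b := p.2) (by simpa using hp)
      obtain ⟨cs'', g, h, e, n⟩ := ih p hp (OccIn.step hocc hmem.1)
      exact ⟨cs'', g, h, e, n (hsides p.1 hmem.1)⟩
    obtain ⟨cs', g', e', n', h'⟩ := red_fold (List.zip cs Hs) hyp
    rw [List.map_snd_zip (l₁ := cs) (l₂ := Hs) (le_of_eq hlen.symm)] at e'
    refine ⟨cs', g', ?_, e', ?_⟩
    · apply h'
      rw [countP_zip_fst hlen]
      exact hcount
    · intro hs hneg; exact absurd hneg (fun hx => hnotneg hs hx)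
  | @innerB br l s cs Hs hne hsides hlen hzip ih =>
    intro hocc
    have hnotneg : (Tab.lit (Tab.node l s cs)).1 = false → False := by
      intro hneg
      exact hhyper.2 br _ hocc hne ⟨hneg, ⟨br, _, hocc, rfl⟩⟩
    have hyp : ∀ p ∈ List.zip cs Hs, ∃ cs : CForm, cformGround cs ∧ hornCForm cs ∧
        EquivF p.2 (cformFml cs) := by
      intro p hp
      have hmem := List.of_mem_zip (a := p.1) (b := p.2) (by simpa using hp)
      obtain ⟨cs'', g, h, e, _⟩ := ih p hp (OccIn.step hocc hmem.1)
      exact ⟨cs'', g, h, e⟩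
    obtain ⟨cs', g', h', e'⟩ := blue_fold (List.zip cs Hs) hyp
    rw [List.map_snd_zip (l₁ := cs) (l₂ := Hs) (le_of_eq hlen.symm)] at e'
    exact ⟨cs', g', h', e', fun _ hneg => absurd hneg (fun hx => hnotneg hx)⟩
/-- For a closed two-sided clausal ground tableau for `Fr` and `Fb`
that is a positive hyper tableau, where `Fr` is Horn, the ipol value of every
node (in particular of the root) is equivalent to a ground Horn clausal formula. -/
theorem ipol_horn (Fr Fb : CForm) (T : List Tab)
    (hgFr : cformGround Fr) (hgFb : cformGround Fb)
    (hHorn : hornCForm Fr)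
    (htab : TwoTableauFor Fr Fb T)
    (hgT : ∀ br t, OccIn T br t → litGround (Tab.lit t))
    (hclosed : ∀ t ∈ T, SClosedFrom [] t)
    (hhyper : PositiveHyper T) :
    (∀ br t, OccIn T br t → ∀ H, Ipol br t H →
        ∃ cs : CForm, cformGround cs ∧ hornCForm cs ∧ EquivF H (cformFml cs))
    ∧ (∀ H, IpolRoot T H →
        ∃ cs : CForm, cformGround cs ∧ hornCForm cs ∧ EquivF H (cformFml cs)) := by
  constructor
  · intro br t hocc H hip
    obtain ⟨cs, g, h, e, _⟩ := ipol_aux Fr Fb T hHorn htab hgT hhyper br t H hip hocc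
    exact ⟨cs, g, h, e⟩
  · intro H hip
    cases hip with
    | @rootR Hs hne hsides hlen hzip =>
      have hyp : ∀ p ∈ List.zip T Hs, ∃ cs : CForm, cformGround cs ∧ hornCForm cs ∧
          EquivF p.2 (cformFml cs) ∧ ((p.1.lit).1 = false → allNegCF cs) := by
        intro p hp
        have hmem := List.of_mem_zip (a := p.1) (b := p.2) (by simpa using hp)
        obtain ⟨cs'', g, h, e, n⟩ :=
          ipol_aux Fr Fb T hHorn htab hgT hhyper [] p.1 p.2 (hzip p hp) (OccIn.top hmem.1)
        exact ⟨cs'', g, h, e, n (hsides p.1 hmem.1)⟩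
      have hcount : T.countP (fun c => (Tab.lit c).1 == true) ≤ 1 := by
        rcases htab.1 with h1 | ⟨b, hb, D, hD, hinst⟩
        · exact absurd h1 hne
        · have hbt : b = true := by
            obtain ⟨c, hc⟩ := List.exists_mem_of_ne_nil T hne
            rw [← hb c hc, hsides c hc]
          subst hbt
          simp only [if_pos rfl] at hD
          exact count_le_of_inst hHorn hD hinst
      obtain ⟨cs', g', e', n', h'⟩ := red_fold (List.zip T Hs) hyp
      rw [List.map_snd_zip (l₁ := T) (l₂ := Hs) (le_of_eq hlen.symm)] at e'
      refine ⟨cs', g', ?_, e'⟩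
      apply h'
      rw [countP_zip_fst hlen]
      exact hcount
    | @rootB Hs hne hsides hlen hzip =>
      have hyp : ∀ p ∈ List.zip T Hs, ∃ cs : CForm, cformGround cs ∧ hornCForm cs ∧
          EquivF p.2 (cformFml cs) := by
        intro p hp
        have hmem := List.of_mem_zip (a := p.1) (b := p.2) (by simpa using hp)
        obtain ⟨cs'', g, h, e, _⟩ :=
          ipol_aux Fr Fb T hHorn htab hgT hhyper [] p.1 p.2 (hzip p hp) (OccIn.top hmem.1)
        exact ⟨cs'', g, h, e⟩
      obtain ⟨cs', g', h', e'⟩ := blue_fold (List.zip T Hs) hyp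
      rw [List.map_snd_zip (l₁ := T) (l₂ := Hs) (le_of_eq hlen.symm)] at e'
      exact ⟨cs', g', h', e'⟩

end CTI
end
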